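/- Let φ̃(z) = k²·sn z·cn z·(K·E(z,k) − E·z) + (E − K)·dn z + k²·K·cn²z·dn z. Then L₊[φ̃] = 2((k²−2)E − 2(k²−1)K)·dn z, and consequently L₋L₊[φ̃] = 0. -/

import Mathlib

open MeasureTheory

/-- Complete elliptic integral of the first kind. -/
noncomputable def ellipticK (k : ℝ) : ℝ :=
  ∫ θ in (0:ℝ)..(Real.pi / 2), 1 / Real.sqrt (1 - k ^ 2 * Real.sin θ ^ 2)

/-- Complete elliptic integral of the second kind. -/
noncomputable def ellipticE (k : ℝ) : ℝ :=
  ∫ θ in (0:ℝ)..(Real.pi / 2), Real.sqrt (1 - k ^ 2 * Real.sin θ ^ 2)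

/-- The operator L₋f = −f'' − (2 dn²z + k² − 2)f. -/
noncomputable def Lm (k : ℝ) (dn : ℝ → ℝ) (f : ℝ → ℝ) : ℝ → ℝ :=
  fun z => -(deriv (deriv f) z) - (2 * dn z ^ 2 + k ^ 2 - 2) * f z

/-- The operator L₊f = −f'' − (6 dn²z + k² − 2)f. -/
noncomputable def Lp (k : ℝ) (dn : ℝ → ℝ) (f : ℝ → ℝ) : ℝ → ℝ :=
  fun z => -(deriv (deriv f) z) - (6 * dn z ^ 2 + k ^ 2 - 2) * f z

/-- with φ̃(z) = k²·sn z·cn z·(K·E(z,k) − E·z) + (E − K)·dn z + k²·K·cn²z·dn z,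
one has L₊[φ̃] = 2((k²−2)E − 2(k²−1)K)·dn z and hence L₋L₊[φ̃] = 0. -/
theorem stmt_4 (k : ℝ) (hk0 : 0 < k) (hk1 : k < 1)
    (sn cn dn : ℝ → ℝ)
    (hsn0 : sn 0 = 0) (hcn0 : cn 0 = 1) (hdn0 : dn 0 = 1)
    (hsn' : ∀ z, HasDerivAt sn (cn z * dn z) z)
    (hcn' : ∀ z, HasDerivAt cn (-(sn z * dn z)) z)
    (hdn' : ∀ z, HasDerivAt dn (-(k ^ 2 * sn z * cn z)) z)
    (φt : ℝ → ℝ)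
    (hφt : ∀ z, φt z = k ^ 2 * sn z * cn z *
        (ellipticK k * (∫ y in (0:ℝ)..z, dn y ^ 2) - ellipticE k * z)
      + (ellipticE k - ellipticK k) * dn z + k ^ 2 * ellipticK k * cn z ^ 2 * dn z) :
    (∀ z, Lp k dn φt z =
      2 * ((k ^ 2 - 2) * ellipticE k - 2 * (k ^ 2 - 1) * ellipticK k) * dn z) ∧
    (∀ z, Lm k dn (Lp k dn φt) z = 0) := by
  set Kc := ellipticK k with hKcdef
  set Ec := ellipticE k with hEcdef
  have hφ : φt = fun z => k ^ 2 * sn z * cn z *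
        (Kc * (∫ y in (0:ℝ)..z, dn y ^ 2) - Ec * z)
      + (Ec - Kc) * dn z + k ^ 2 * Kc * cn z ^ 2 * dn z := funext hφt
  subst hφ
  -- Pythagorean-type identities
  have h1 : ∀ z, sn z ^ 2 + cn z ^ 2 = 1 := by
    have hD : ∀ z, HasDerivAt (fun z => sn z ^ 2 + cn z ^ 2) 0 z := by
      intro z
      have h := ((hsn' z).pow 2).add ((hcn' z).pow 2)
      refine h.congr_deriv ?_
      push_cast
      ring
    intro z
    have := is_const_of_deriv_eq_zero (fun x => (hD x).differentiableAt)
      (fun x => (hD x).deriv) z 0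
    simpa [hsn0, hcn0] using this
  have h2 : ∀ z, dn z ^ 2 + k ^ 2 * sn z ^ 2 = 1 := by
    have hD : ∀ z, HasDerivAt (fun z => dn z ^ 2 + k ^ 2 * sn z ^ 2) 0 z := by
      intro z
      have h := ((hdn' z).pow 2).add (((hsn' z).pow 2).const_mul (k ^ 2))
      refine h.congr_deriv ?_
      push_cast
      ring
    intro z
    have := is_const_of_deriv_eq_zero (fun x => (hD x).differentiableAt)
      (fun x => (hD x).deriv) z 0
    simpa [hsn0, hdn0] using this
  -- derivative of the integral term
  have hdncont : Continuous fun y => dn y ^ 2 :=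
    (continuous_iff_continuousAt.2 fun x => (hdn' x).differentiableAt.continuousAt).pow 2
  have hI : ∀ z, HasDerivAt (fun t => ∫ y in (0:ℝ)..t, dn y ^ 2) (dn z ^ 2) z := by
    intro z
    exact intervalIntegral.integral_hasDerivAt_right
      (hdncont.intervalIntegrable 0 z)
      (hdncont.stronglyMeasurable.stronglyMeasurableAtFilter)
      hdncont.continuousAt
  have hW : ∀ z, HasDerivAt (fun t => Kc * (∫ y in (0:ℝ)..t, dn y ^ 2) - Ec * t)
      (Kc * dn z ^ 2 - Ec * 1) z := by
    intro z
    exact ((hI z).const_mul Kc).sub (HasDerivAt.const_mul Ec (hasDerivAt_id' z))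
  -- first derivative of φt
  have hF1 : ∀ z, HasDerivAt (fun z => k ^ 2 * sn z * cn z *
        (Kc * (∫ y in (0:ℝ)..z, dn y ^ 2) - Ec * z)
      + (Ec - Kc) * dn z + k ^ 2 * Kc * cn z ^ 2 * dn z)
      (k ^ 2 * cn z ^ 2 * dn z * (Kc * (∫ y in (0:ℝ)..z, dn y ^ 2) - Ec * z)
        - k ^ 2 * sn z ^ 2 * dn z * (Kc * (∫ y in (0:ℝ)..z, dn y ^ 2) - Ec * z)
        - 2 * k ^ 2 * Ec * sn z * cn z + k ^ 2 * Kc * sn z * cn z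
        - k ^ 2 * Kc * sn z * cn z * dn z ^ 2 - k ^ 4 * Kc * sn z * cn z ^ 3) z := by
    intro z
    have h := ((((hsn' z).const_mul (k ^ 2)).mul (hcn' z)).mul (hW z)).add
        ((hdn' z).const_mul (Ec - Kc)) |>.add
        ((((hcn' z).pow 2).const_mul (k ^ 2 * Kc)).mul (hdn' z))
    refine h.congr_deriv ?_
    push_cast
    simp only [Pi.mul_apply, Pi.pow_apply]
    ring
  -- second derivative of φt
  have hF2 : ∀ z, HasDerivAt (fun z =>
        k ^ 2 * cn z ^ 2 * dn z * (Kc * (∫ y in (0:ℝ)..z, dn y ^ 2) - Ec * z)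
        - k ^ 2 * sn z ^ 2 * dn z * (Kc * (∫ y in (0:ℝ)..z, dn y ^ 2) - Ec * z)
        - 2 * k ^ 2 * Ec * sn z * cn z + k ^ 2 * Kc * sn z * cn z
        - k ^ 2 * Kc * sn z * cn z * dn z ^ 2 - k ^ 4 * Kc * sn z * cn z ^ 3)
      (-(4 * k ^ 2 * sn z * cn z * dn z ^ 2 * (Kc * (∫ y in (0:ℝ)..z, dn y ^ 2) - Ec * z))
        - 3 * k ^ 2 * Ec * cn z ^ 2 * dn z + 3 * k ^ 2 * Ec * sn z ^ 2 * dn z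
        + k ^ 2 * Kc * cn z ^ 2 * dn z - k ^ 2 * Kc * sn z ^ 2 * dn z
        - k ^ 4 * sn z * cn z ^ 3 * (Kc * (∫ y in (0:ℝ)..z, dn y ^ 2) - Ec * z)
        + k ^ 4 * sn z ^ 3 * cn z * (Kc * (∫ y in (0:ℝ)..z, dn y ^ 2) - Ec * z)
        - k ^ 4 * Kc * cn z ^ 4 * dn z + 5 * k ^ 4 * Kc * sn z ^ 2 * cn z ^ 2 * dn z) z := by
    intro z
    have h := (((((((((hcn' z).pow 2).const_mul (k ^ 2)).mul (hdn' z)).mul (hW z)).sub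
        (((((hsn' z).pow 2).const_mul (k ^ 2)).mul (hdn' z)).mul (hW z))).sub
        (((hsn' z).const_mul (2 * k ^ 2 * Ec)).mul (hcn' z))).add
        (((hsn' z).const_mul (k ^ 2 * Kc)).mul (hcn' z))).sub
        ((((hsn' z).const_mul (k ^ 2 * Kc)).mul (hcn' z)).mul ((hdn' z).pow 2))).sub
        (((hsn' z).const_mul (k ^ 4 * Kc)).mul ((hcn' z).pow 3))
    refine h.congr_deriv ?_
    push_cast
    simp only [Pi.mul_apply, Pi.pow_apply]
    ring
  have hd2 : ∀ z, deriv (deriv fun z => k ^ 2 * sn z * cn z *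
        (Kc * (∫ y in (0:ℝ)..z, dn y ^ 2) - Ec * z)
      + (Ec - Kc) * dn z + k ^ 2 * Kc * cn z ^ 2 * dn z) z =
      (-(4 * k ^ 2 * sn z * cn z * dn z ^ 2 * (Kc * (∫ y in (0:ℝ)..z, dn y ^ 2) - Ec * z))
        - 3 * k ^ 2 * Ec * cn z ^ 2 * dn z + 3 * k ^ 2 * Ec * sn z ^ 2 * dn z
        + k ^ 2 * Kc * cn z ^ 2 * dn z - k ^ 2 * Kc * sn z ^ 2 * dn z
        - k ^ 4 * sn z * cn z ^ 3 * (Kc * (∫ y in (0:ℝ)..z, dn y ^ 2) - Ec * z)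
        + k ^ 4 * sn z ^ 3 * cn z * (Kc * (∫ y in (0:ℝ)..z, dn y ^ 2) - Ec * z)
        - k ^ 4 * Kc * cn z ^ 4 * dn z + 5 * k ^ 4 * Kc * sn z ^ 2 * cn z ^ 2 * dn z) := by
    intro z
    have : (deriv fun z => k ^ 2 * sn z * cn z *
        (Kc * (∫ y in (0:ℝ)..z, dn y ^ 2) - Ec * z)
      + (Ec - Kc) * dn z + k ^ 2 * Kc * cn z ^ 2 * dn z) = fun z =>
        k ^ 2 * cn z ^ 2 * dn z * (Kc * (∫ y in (0:ℝ)..z, dn y ^ 2) - Ec * z)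
        - k ^ 2 * sn z ^ 2 * dn z * (Kc * (∫ y in (0:ℝ)..z, dn y ^ 2) - Ec * z)
        - 2 * k ^ 2 * Ec * sn z * cn z + k ^ 2 * Kc * sn z * cn z
        - k ^ 2 * Kc * sn z * cn z * dn z ^ 2 - k ^ 4 * Kc * sn z * cn z ^ 3 :=
      funext fun x => (hF1 x).deriv
    rw [this, (hF2 z).deriv]
  have part1 : ∀ z, Lp k dn (fun z => k ^ 2 * sn z * cn z *
        (Kc * (∫ y in (0:ℝ)..z, dn y ^ 2) - Ec * z)
      + (Ec - Kc) * dn z + k ^ 2 * Kc * cn z ^ 2 * dn z) z =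
      2 * ((k ^ 2 - 2) * Ec - 2 * (k ^ 2 - 1) * Kc) * dn z := by
    intro z
    unfold _root_.Lp
    rw [hd2 z]
    linear_combination
      (-(6 * Ec * dn z) + 6 * Kc * dn z
        - 2 * k ^ 2 * sn z * cn z * (Kc * (∫ y in (0:ℝ)..z, dn y ^ 2) - Ec * z)
        - 6 * k ^ 2 * Kc * cn z ^ 2 * dn z) * h2 z +
      (3 * k ^ 2 * Ec * dn z - 5 * k ^ 2 * Kc * dn z
        + k ^ 4 * sn z * cn z * (Kc * (∫ y in (0:ℝ)..z, dn y ^ 2) - Ec * z)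
        + k ^ 4 * Kc * cn z ^ 2 * dn z) * h1 z
  refine ⟨part1, ?_⟩
  have hLpfun : Lp k dn (fun z => k ^ 2 * sn z * cn z *
        (Kc * (∫ y in (0:ℝ)..z, dn y ^ 2) - Ec * z)
      + (Ec - Kc) * dn z + k ^ 2 * Kc * cn z ^ 2 * dn z) =
      fun z => 2 * ((k ^ 2 - 2) * Ec - 2 * (k ^ 2 - 1) * Kc) * dn z := funext part1
  intro z
  rw [hLpfun]
  set C := 2 * ((k ^ 2 - 2) * Ec - 2 * (k ^ 2 - 1) * Kc) with hCdef
  have hG1 : ∀ z, HasDerivAt (fun z => C * dn z) (C * -(k ^ 2 * sn z * cn z)) z :=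
    fun z => (hdn' z).const_mul C
  have hG2 : ∀ z, HasDerivAt (fun z => C * -(k ^ 2 * sn z * cn z))
      (-(C * k ^ 2 * dn z * (cn z ^ 2 - sn z ^ 2))) z := by
    intro z
    have h := ((((hsn' z).const_mul (k ^ 2)).mul (hcn' z)).neg).const_mul C
    refine h.congr_deriv ?_
    ring
  have hdd : deriv (deriv fun z => C * dn z) z =
      -(C * k ^ 2 * dn z * (cn z ^ 2 - sn z ^ 2)) := by
    have : (deriv fun z => C * dn z) = fun z => C * -(k ^ 2 * sn z * cn z) :=
      funext fun x => (hG1 x).deriv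
    rw [this, (hG2 z).deriv]
  unfold _root_.Lm
  rw [hdd]
  linear_combination (C * k ^ 2 * dn z) * h1 z - (2 * C * dn z) * h2 z
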